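/- Let H₁,…,H_N be self-adjoint complex n×n matrices and for t ∈ ℝ define ψ(t) = e^{−i(1+t)H₁}⋯e^{−i(1+t)H_N} ψ₀ for a fixed ψ₀ ∈ ℂⁿ. Then ψ is differentiable and satisfies the ODE ψ'(t) = −i ℋ(t) ψ(t), where ℋ(t) = H₁ + e^{−i(1+t)ad H₁}(H₂) + ⋯ + e^{−i(1+t)ad H₁}⋯e^{−i(1+t)ad H_{N−1}}(H_N). -/

import Mathlib

open Matrix

attribute [local instance] Matrix.linftyOpNormedAddCommGroup Matrix.linftyOpNormedSpace
  Matrix.linftyOpNormedRing Matrix.linftyOpNormedAlgebra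

/-- Spectral norm (largest singular value) of a complex square matrix. -/
noncomputable def sN {n : ℕ} (M : Matrix (Fin n) (Fin n) ℂ) : ℝ :=
  ‖Matrix.toEuclideanCLM (𝕜 := ℂ) M‖

/-- `ad A` as a continuous linear map `X ↦ A*X - X*A`. -/
noncomputable def adC {n : ℕ} (A : Matrix (Fin n) (Fin n) ℂ) :
    Matrix (Fin n) (Fin n) ℂ →L[ℂ] Matrix (Fin n) (Fin n) ℂ :=
  (LinearMap.mulLeft ℂ A - LinearMap.mulRight ℂ A).toContinuousLinearMap

namespace Stmt18Aux

open NormedSpace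

variable {n : ℕ}

local notation "Mat" => Matrix (Fin n) (Fin n) ℂ

noncomputable abbrev clmTR : IsTopologicalRing (Mat →L[ℂ] Mat) :=
  @NonUnitalSeminormedRing.toIsTopologicalRing _
    (@NormedRing.toSeminormedRing _ ContinuousLinearMap.toNormedRing).toNonUnitalSeminormedRing

attribute [local instance] clmTR

noncomputable abbrev clmNR : NormedRing (Mat →L[ℂ] Mat) := ContinuousLinearMap.toNormedRing

attribute [local instance] clmNR

noncomputable abbrev clmNA : NormedAlgebra ℂ (Mat →L[ℂ] Mat) := ContinuousLinearMap.toNormedAlgebra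

attribute [local instance] clmNA

lemma clmCS : CompleteSpace (Mat →L[ℂ] Mat) := by
  haveI : SequentialSpace Mat := (inferInstance : SequentialSpace (Fin n → Fin n → ℂ))
  exact ContinuousLinearMap.instCompleteSpace

lemma clmCS2 : @CompleteSpace (Mat →L[ℂ] Mat) (PseudoMetricSpace.toUniformSpace (α := Mat →L[ℂ] Mat)) := by
  haveI : SequentialSpace Mat := (inferInstance : SequentialSpace (Fin n → Fin n → ℂ))
  exact ContinuousLinearMap.instCompleteSpace

attribute [local instance] clmCS clmCS2

noncomputable abbrev clmNQ : NormedAlgebra ℚ (Mat →L[ℂ] Mat) := NormedAlgebra.restrictScalars ℚ ℂ _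

attribute [local instance] clmNQ

noncomputable def mlC (A : Mat) : Mat →L[ℂ] Mat :=
  (LinearMap.mulLeft ℂ A).toContinuousLinearMap

noncomputable def mrC (A : Mat) : Mat →L[ℂ] Mat :=
  (LinearMap.mulRight ℂ A).toContinuousLinearMap

lemma mlC_apply (A X : Mat) : mlC A X = A * X := rfl

lemma mrC_apply (A X : Mat) : mrC A X = X * A := rfl

lemma adC_apply (A X : Mat) : adC A X = A * X - X * A := rfl

lemma adC_eq (A : Mat) : adC A = mlC A - mrC A := by
  ext X
  simp only [adC_apply, ContinuousLinearMap.sub_apply, mlC_apply, mrC_apply]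

lemma adC_smul (c : ℂ) (A : Mat) : adC (c • A) = c • adC A := by
  ext X
  simp only [adC_apply, ContinuousLinearMap.smul_apply, smul_sub, mul_smul_comm,
    smul_mul_assoc]

lemma mlC_pow_apply (A : Mat) (k : ℕ) (X : Mat) : ((mlC A) ^ k) X = A ^ k * X := by
  induction k with
  | zero => simp
  | succ k ih =>
    rw [pow_succ', pow_succ', ContinuousLinearMap.mul_apply, ih, mlC_apply, mul_assoc]

lemma mrC_pow_apply (A : Mat) (k : ℕ) (X : Mat) : ((mrC A) ^ k) X = X * A ^ k := by
  induction k with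
  | zero => simp
  | succ k ih =>
    rw [pow_succ', pow_succ, ContinuousLinearMap.mul_apply, ih, mrC_apply, mul_assoc]

lemma exp_mlC_apply (A X : Mat) : exp (mlC A) X = exp A * X := by
  rw [exp_eq_tsum (𝕂 := ℂ), exp_eq_tsum (𝕂 := ℂ)]
  have h1 : Summable fun k : ℕ => ((k.factorial)⁻¹ : ℂ) • (mlC A) ^ k := expSeries_summable' _
  have h2 : Summable fun k : ℕ => ((k.factorial)⁻¹ : ℂ) • A ^ k := expSeries_summable' _
  calc (∑' k : ℕ, ((k.factorial)⁻¹ : ℂ) • (mlC A) ^ k) X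
      = ∑' k : ℕ, (((k.factorial)⁻¹ : ℂ) • (mlC A) ^ k) X :=
        ((ContinuousLinearMap.apply ℂ Mat X).map_tsum h1)
    _ = ∑' k : ℕ, (((k.factorial)⁻¹ : ℂ) • A ^ k) * X := by
        refine tsum_congr fun k => ?_
        rw [ContinuousLinearMap.smul_apply, mlC_pow_apply, smul_mul_assoc]
    _ = (∑' k : ℕ, ((k.factorial)⁻¹ : ℂ) • A ^ k) * X :=
        (((ContinuousLinearMap.mul ℂ Mat).flip X).map_tsum h2).symm

lemma exp_mrC_apply (A X : Mat) : exp (mrC A) X = X * exp A := by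
  rw [exp_eq_tsum (𝕂 := ℂ), exp_eq_tsum (𝕂 := ℂ)]
  have h1 : Summable fun k : ℕ => ((k.factorial)⁻¹ : ℂ) • (mrC A) ^ k := expSeries_summable' _
  have h2 : Summable fun k : ℕ => ((k.factorial)⁻¹ : ℂ) • A ^ k := expSeries_summable' _
  calc (∑' k : ℕ, ((k.factorial)⁻¹ : ℂ) • (mrC A) ^ k) X
      = ∑' k : ℕ, (((k.factorial)⁻¹ : ℂ) • (mrC A) ^ k) X :=
        ((ContinuousLinearMap.apply ℂ Mat X).map_tsum h1)
    _ = ∑' k : ℕ, X * (((k.factorial)⁻¹ : ℂ) • A ^ k) := by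
        refine tsum_congr fun k => ?_
        rw [ContinuousLinearMap.smul_apply, mrC_pow_apply, mul_smul_comm]
    _ = X * (∑' k : ℕ, ((k.factorial)⁻¹ : ℂ) • A ^ k) :=
        (((ContinuousLinearMap.mul ℂ Mat) X).map_tsum h2).symm

lemma commute_mlC_mrC (A B : Mat) : Commute (mlC A) (mrC B) := by
  refine ContinuousLinearMap.ext fun X => ?_
  simp [ContinuousLinearMap.mul_apply, mlC_apply, mrC_apply, mul_assoc]

lemma neg_mrC (A : Mat) : -mrC A = mrC (-A) := by
  ext X
  simp [mrC_apply]

lemma exp_adC_apply (A X : Mat) : exp (adC A) X = exp A * X * exp (-A) := by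
  erw [adC_eq, sub_eq_add_neg,
    NormedSpace.exp_add_of_commute ((commute_mlC_mrC A A).neg_right)]
  change exp (mlC A) (exp (-mrC A) X) = _
  rw [neg_mrC, exp_mrC_apply, exp_mlC_apply, mul_assoc]

lemma exp_neg_mul_exp (A : Mat) : exp (-A) * exp A = 1 := by
  rw [← Matrix.exp_add_of_commute _ _ (Commute.neg_left (Commute.refl A)), neg_add_cancel, exp_zero]

/-- The list product of exponentials. -/
noncomputable def Pm (H : ℕ → Mat) (c : ℂ) (N : ℕ) : Mat :=
  ((List.range N).map (fun j => exp (c • H j))).prod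

/-- The list product of adjoint exponentials. -/
noncomputable def Am (H : ℕ → Mat) (c : ℂ) (k : ℕ) : Mat →L[ℂ] Mat :=
  ((List.range k).map (fun j => exp (c • adC (H j)))).prod

lemma Pm_succ (H : ℕ → Mat) (c : ℂ) (N : ℕ) :
    Pm H c (N + 1) = Pm H c N * exp (c • H N) := by
  simp [Pm, List.range_succ]

lemma Am_succ_apply (H : ℕ → Mat) (c : ℂ) (k : ℕ) (X : Mat) :
    Am H c (k + 1) X = Am H c k (exp (c • adC (H k)) X) := by
  simp [Am, List.range_succ, ContinuousLinearMap.mul_apply]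

lemma conj_key (H : ℕ → Mat) (c : ℂ) (k : ℕ) (X : Mat) :
    Am H c k X * Pm H c k = Pm H c k * X := by
  induction k generalizing X with
  | zero => simp [Am, Pm]
  | succ k ih =>
    rw [Am_succ_apply, Pm_succ, ← mul_assoc, ih, ← adC_smul, exp_adC_apply,
      mul_assoc, mul_assoc, mul_assoc, exp_neg_mul_exp, mul_one, ← mul_assoc]

noncomputable def cc (s : ℝ) : ℂ := -(Complex.I * (1 + (s : ℂ)))

lemma hasDerivAt_cc (t : ℝ) : HasDerivAt cc (-Complex.I) t := by
  have h0 : HasDerivAt (fun s : ℝ => (s : ℂ)) 1 t := by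
    exact Complex.ofRealCLM.hasDerivAt
  have h1 := ((h0.const_add (1 : ℂ)).const_mul Complex.I).neg
  have hcc : cc = -fun y : ℝ => Complex.I * (1 + (y : ℂ)) := by
    funext s; simp [cc]
  rw [hcc, show -Complex.I = -(Complex.I * 1) by ring]; exact h1

lemma commute_exp (c : ℂ) (A : Mat) : exp (c • A) * A = A * exp (c • A) :=
  (((Commute.refl A).smul_left c).exp_left).eq

lemma main (H : ℕ → Mat) (t : ℝ) (N : ℕ) :
    HasDerivAt (fun s : ℝ => Pm H (cc s) N)
      ((-Complex.I) • ((∑ k ∈ Finset.range N, Am H (cc t) k (H k)) * Pm H (cc t) N)) t := by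
  induction N with
  | zero =>
    simp only [Pm, List.range_zero, List.map_nil, List.prod_nil, Finset.range_zero,
      Finset.sum_empty, zero_mul, smul_zero]
    exact hasDerivAt_const t (1 : Mat)
  | succ N ih =>
    have hexp : HasDerivAt (fun u : ℂ => exp (u • H N)) (exp (cc t • H N) * H N) (cc t) :=
      hasDerivAt_exp_smul_const _ _
    have hE : HasDerivAt (fun s : ℝ => exp (cc s • H N))
        ((-Complex.I) • (exp (cc t • H N) * H N)) t := HasDerivAt.scomp t hexp (hasDerivAt_cc t)
    have hmul := ih.mul hE
    have hfun : ((fun s : ℝ => Pm H (cc s) N) * fun s : ℝ => exp (cc s • H N))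
        = fun s : ℝ => Pm H (cc s) (N + 1) := by
      funext s; rw [Pi.mul_apply, Pm_succ]
    rw [hfun] at hmul
    refine hmul.congr_deriv ?_
    symm
    rw [Finset.sum_range_succ, Pm_succ, add_mul, smul_add]
    congr 1
    · rw [smul_mul_assoc, mul_assoc]
    · rw [mul_smul_comm]
      congr 1
      rw [← mul_assoc, conj_key, commute_exp, mul_assoc]

noncomputable def Lpsi (ψ₀ : EuclideanSpace ℂ (Fin n)) :
    Mat →L[ℂ] EuclideanSpace ℂ (Fin n) :=
  LinearMap.toContinuousLinearMap
    { toFun := fun M => Matrix.toEuclideanCLM (𝕜 := ℂ) M ψ₀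
      map_add' := fun A B => by simp
      map_smul' := fun c A => by simp }

lemma Lpsi_apply (ψ₀ : EuclideanSpace ℂ (Fin n)) (M : Mat) :
    Lpsi ψ₀ M = Matrix.toEuclideanCLM (𝕜 := ℂ) M ψ₀ := rfl

end Stmt18Aux

/-- The perturbed state `ψ(t) = e^{−i(1+t)H₀}⋯e^{−i(1+t)H_{N-1}} ψ₀` satisfies
`ψ'(t) = −i ℋ(t) ψ(t)` with
`ℋ(t) = Σ_k e^{−i(1+t)ad H₀}⋯e^{−i(1+t)ad H_{k-1}}(H_k)` (0-indexed). -/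
theorem stmt_18 (n N : ℕ) (H : ℕ → Matrix (Fin n) (Fin n) ℂ) (hH : ∀ j, (H j)ᴴ = H j)
    (ψ₀ : EuclideanSpace ℂ (Fin n)) (t : ℝ) :
    HasDerivAt
      (fun s : ℝ => Matrix.toEuclideanCLM (𝕜 := ℂ)
        (((List.range N).map
          (fun j => NormedSpace.exp ((-(Complex.I * (1 + s))) • H j))).prod) ψ₀)
      ((-Complex.I) • (Matrix.toEuclideanCLM (𝕜 := ℂ)
          (∑ k ∈ Finset.range N,
            (((List.range k).map
              (fun j => @NormedSpace.exp _ _ _ (@NonUnitalSeminormedRing.toIsTopologicalRing _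
                  (@NormedRing.toSeminormedRing _ ContinuousLinearMap.toNormedRing).toNonUnitalSeminormedRing)
                ((-(Complex.I * (1 + t))) • adC (H j)))).prod) (H k)))
        (Matrix.toEuclideanCLM (𝕜 := ℂ)
          (((List.range N).map
            (fun j => NormedSpace.exp ((-(Complex.I * (1 + t))) • H j))).prod) ψ₀)) t := by
  have hmain := Stmt18Aux.main H t N
  have hcomp := ((Stmt18Aux.Lpsi ψ₀).restrictScalars ℝ).hasFDerivAt.comp_hasDerivAt t hmain
  have hfun : (((Stmt18Aux.Lpsi ψ₀).restrictScalars ℝ) ∘ fun s : ℝ => Stmt18Aux.Pm H (Stmt18Aux.cc s) N)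
      = fun s : ℝ => Matrix.toEuclideanCLM (𝕜 := ℂ)
        (((List.range N).map
          (fun j => NormedSpace.exp ((-(Complex.I * (1 + s))) • H j))).prod) ψ₀ := rfl
  rw [hfun] at hcomp
  refine hcomp.congr_deriv ?_
  have hres : ∀ X : Matrix (Fin n) (Fin n) ℂ,
      (ContinuousLinearMap.restrictScalars ℝ (Stmt18Aux.Lpsi ψ₀)) X = Stmt18Aux.Lpsi ψ₀ X :=
    fun _ => rfl
  show Stmt18Aux.Lpsi ψ₀ _ = _
  simp only [hres, Stmt18Aux.Lpsi_apply, _root_.map_smul, _root_.map_mul, ContinuousLinearMap.smul_apply,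
    ContinuousLinearMap.mul_apply]
  rfl
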